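/- Let X ≥ 2, let B be an R×C matrix with integer entries in {0,…,X}, let \bar{G}_B be the doubled grid of B, and let \bar{G}'_B be the doubled grid of the mirror image of the weighted grid embedding of B along the vertical axis with all shortcut vertices removed. The graph obtained by joining \bar{G}_B and \bar{G}'_B via an edge (b^r_k, b'^l_k) for each 1 ≤ k ≤ R has a unique perfect matching, namely the set of all weight-0 pairing edges {(z^u, z^d)} ∪ {(z^l, z^r)}. -/

import Mathlib

/-- Vertices of the grid embedding: `a j` (top terminals), `b i` (right terminals),
`u i j` (grid intersections), `v i j` (subdivision vertex above `u i j`),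
`w i j` (subdivision vertex to the right of `u i j`), `x i j` (shortcut vertices).
Indices are 1-based natural numbers; out-of-range vertices are isolated. -/
inductive GV : Type
  | a (j : ℕ)
  | b (i : ℕ)
  | u (i j : ℕ)
  | v (i j : ℕ)
  | w (i j : ℕ)
  | x (i j : ℕ)
deriving DecidableEq

/-- One-directional edge weights of the grid embedding of a boolean `R × C` matrix `M`;
`⊤` means "no edge". -/
def dirW (R C : ℕ) (M : ℕ → ℕ → Bool) : GV → GV → ℕ∞
  | GV.a j, GV.v i' j' =>
      if i' = 1 ∧ j' = j ∧ 1 ≤ j ∧ j ≤ C then ((2 * j - 1 : ℕ) : ℕ∞) else ⊤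
  | GV.v i j, GV.u i' j' =>
      if i' = i ∧ j' = j ∧ 1 ≤ i ∧ i ≤ R ∧ 1 ≤ j ∧ j ≤ C then 1 else ⊤
  | GV.u i j, GV.v i' j' =>
      if i' = i + 1 ∧ j' = j ∧ 1 ≤ i ∧ i + 1 ≤ R ∧ 1 ≤ j ∧ j ≤ C then
        ((2 * j - 1 : ℕ) : ℕ∞) else ⊤
  | GV.u i j, GV.w i' j' =>
      if i' = i ∧ j' = j ∧ 1 ≤ i ∧ i ≤ R ∧ 1 ≤ j ∧ j ≤ C then 2 else ⊤
  | GV.w i j, GV.u i' j' =>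
      if i' = i ∧ j' = j + 1 ∧ 1 ≤ i ∧ i ≤ R ∧ 1 ≤ j ∧ j + 1 ≤ C then
        ((2 * R - 2 : ℕ) : ℕ∞) else ⊤
  | GV.w i j, GV.b i' =>
      if i' = i ∧ j = C ∧ 1 ≤ i ∧ i ≤ R ∧ 1 ≤ C then ((2 * R - 2 : ℕ) : ℕ∞) else ⊤
  | GV.v i j, GV.x i' j' =>
      if i' = i ∧ j' = j ∧ M i j = true ∧ 1 ≤ i ∧ i ≤ R ∧ 1 ≤ j ∧ j ≤ C then 1 else ⊤
  | GV.x i j, GV.w i' j' =>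
      if i' = i ∧ j' = j ∧ M i j = true ∧ 1 ≤ i ∧ i ≤ R ∧ 1 ≤ j ∧ j ≤ C then 1 else ⊤
  | _, _ => ⊤

/-- Symmetrization of a one-directional weight function. -/
noncomputable def symW {V : Type} (f : V → V → ℕ∞) : V → V → ℕ∞ := fun p q => min (f p q) (f q p)

/-- Edge weights of the grid embedding of a boolean matrix `M`. -/
noncomputable def gridW (R C : ℕ) (M : ℕ → ℕ → Bool) : GV → GV → ℕ∞ := symW (dirW R C M)

/-- One-directional edge weights of the weighted grid embedding of an `R × C` matrix `M`
with entries in `{0, …, X}`: the grid embedding of the all-ones boolean matrix with every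
weight multiplied by `X²`, and the weight of each edge `(v i j, x i j)` increased by `M i j`. -/
def dirWt (R C X : ℕ) (M : ℕ → ℕ → ℕ) : GV → GV → ℕ∞ := fun p q =>
  (X : ℕ∞) ^ 2 * dirW R C (fun _ _ => true) p q +
    (match p, q with
      | GV.v i j, GV.x i' j' => if i' = i ∧ j' = j then (M i j : ℕ∞) else 0
      | _, _ => 0)

/-- Edge weights of the weighted grid embedding of `M`. -/
noncomputable def wgridW (R C X : ℕ) (M : ℕ → ℕ → ℕ) : GV → GV → ℕ∞ := symW (dirWt R C X M)

/-- Edge weights of the mirrored grid `G'`: the (weighted, scaled by `X²`) grid embedding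
with all shortcut vertices removed.  Mirroring is a weight-preserving graph isomorphism, so
the mirrored copy is represented by the same abstract graph. -/
noncomputable def mirW (R C X : ℕ) : GV → GV → ℕ∞ :=
  fun p q => (X : ℕ∞) ^ 2 * gridW R C (fun _ _ => false) p q

/-- Total weight of a walk, given as its list of visited vertices. -/
def cost {V : Type} (W : V → V → ℕ∞) : List V → ℕ∞
  | p :: q :: l => W p q + cost W (q :: l)
  | _ => 0

/-- Shortest-path distance: the least total weight of a walk from `s` to `t`
(`⊤` if there is none; walks through a non-edge have cost `⊤`). -/
noncomputable def gdist {V : Type} (W : V → V → ℕ∞) (s t : V) : ℕ∞ :=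
  sInf {c | ∃ l : List V, l.head? = some s ∧ l.getLast? = some t ∧ cost W l = c}

/-- One-directional edge weights of the doubled grid of a (weighted) grid `W0`.
A vertex `(z, b)` is a copy of the vertex `z`: for `a`, `u`, `v`, `x` vertices `b = true`
is the "up" copy `z^u` and `b = false` the "down" copy `z^d`; for `b`, `w` vertices
`b = true` is the "left" copy `z^l` and `b = false` the "right" copy `z^r`.
Each vertex is split into a weight-0 pairing edge, and each original edge is replaced by
one edge between appropriate copies, keeping its weight. -/
def dblDir (C : ℕ) (W0 : GV → GV → ℕ∞) : GV × Bool → GV × Bool → ℕ∞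
  | (GV.u i j, true), (GV.v i' j', false) =>
      if i' = i ∧ j' = j then W0 (GV.u i j) (GV.v i j) else ⊤
  | (GV.u i j, false), (GV.w i' j', true) =>
      if i' = i ∧ j' = j then W0 (GV.u i j) (GV.w i j) else ⊤
  | (GV.u i j, false), (GV.v i' j', true) =>
      if i' = i + 1 ∧ j' = j then W0 (GV.u i j) (GV.v (i + 1) j) else ⊤
  | (GV.u i j, true), (GV.w i' j', false) =>
      if i' = i ∧ j = j' + 1 then W0 (GV.u i j) (GV.w i j') else ⊤
  | (GV.v i j, false), (GV.x i' j', true) =>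
      if i' = i ∧ j' = j then W0 (GV.v i j) (GV.x i j) else ⊤
  | (GV.x i j, false), (GV.w i' j', true) =>
      if i' = i ∧ j' = j then W0 (GV.x i j) (GV.w i j) else ⊤
  | (GV.a j, false), (GV.v i' j', true) =>
      if i' = 1 ∧ j' = j then W0 (GV.a j) (GV.v 1 j) else ⊤
  | (GV.w i j, false), (GV.b i', true) =>
      if i' = i ∧ j = C then W0 (GV.w i j) (GV.b i) else ⊤
  | (p, true), (q, false) => if p = q then 0 else ⊤
  | _, _ => ⊤

/-- Edge weights of the doubled grid of `W0`. -/
noncomputable def dblW (C : ℕ) (W0 : GV → GV → ℕ∞) : GV × Bool → GV × Bool → ℕ∞ :=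
  symW (dblDir C W0)

/-- Membership in the (finite) vertex set of a grid embedding: the in-range vertices,
with the shortcut vertices `x i j` present only when `withX = true`. -/
def inV (R C : ℕ) (withX : Bool) : GV → Prop
  | GV.a j => 1 ≤ j ∧ j ≤ C
  | GV.b i => 1 ≤ i ∧ i ≤ R
  | GV.u i j => 1 ≤ i ∧ i ≤ R ∧ 1 ≤ j ∧ j ≤ C
  | GV.v i j => 1 ≤ i ∧ i ≤ R ∧ 1 ≤ j ∧ j ≤ C
  | GV.w i j => 1 ≤ i ∧ i ≤ R ∧ 1 ≤ j ∧ j ≤ C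
  | GV.x i j => withX = true ∧ 1 ≤ i ∧ i ≤ R ∧ 1 ≤ j ∧ j ≤ C

/-- Edge weights of the graph joining the doubled grid `\bar{G}_B` (the `inl` copy, from
the weighted grid embedding of `B`) and the doubled mirrored grid `\bar{G}'_B` (the `inr`
copy, from the mirrored grid with shortcuts removed; mirroring is a weight-preserving
isomorphism under which the free copy `b'^l k` corresponds to `(b k, false)`), via an edge
`(b^r k, b'^l k)` of weight `X²·2(C+1)(R−k) + A k` for each `1 ≤ k ≤ R`. -/
noncomputable def jdblW (R C X : ℕ) (A : ℕ → ℕ) (B : ℕ → ℕ → ℕ) :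
    (GV × Bool) ⊕ (GV × Bool) → (GV × Bool) ⊕ (GV × Bool) → ℕ∞
  | Sum.inl p, Sum.inl q => dblW C (wgridW R C X B) p q
  | Sum.inr p, Sum.inr q => dblW C (mirW R C X) p q
  | Sum.inl (GV.b k, false), Sum.inr (GV.b k', false) =>
      if k' = k ∧ 1 ≤ k ∧ k ≤ R then
        ((X ^ 2 * (2 * (C + 1) * (R - k)) + A k : ℕ) : ℕ∞) else ⊤
  | Sum.inr (GV.b k', false), Sum.inl (GV.b k, false) =>
      if k' = k ∧ 1 ≤ k ∧ k ≤ R then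
        ((X ^ 2 * (2 * (C + 1) * (R - k)) + A k : ℕ) : ℕ∞) else ⊤
  | _, _ => ⊤

/-- The vertex set of the joined doubled graph: both boolean copies of every in-range
vertex, where the mirrored (`inr`) copy has no shortcut vertices. -/
def SJD (R C : ℕ) : Set ((GV × Bool) ⊕ (GV × Bool)) := fun p =>
  match p with
  | Sum.inl (z, _) => inV R C true z
  | Sum.inr (z, _) => inV R C false z

/-- `e` is an edge of the graph with weights `W` joining two distinct vertices of `S`. -/
def edgeOK {V : Type} (W : V → V → ℕ∞) (S : Set V) (e : Sym2 V) : Prop :=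
  ∃ p q : V, e = s(p, q) ∧ p ≠ q ∧ W p q ≠ ⊤ ∧ p ∈ S ∧ q ∈ S

/-- `E` is a matching of the graph with weights `W` on the vertex set `S`:
a set of pairwise disjoint edges. -/
def IsMatch {V : Type} (W : V → V → ℕ∞) (S : Set V) (E : Finset (Sym2 V)) : Prop :=
  (∀ e ∈ E, edgeOK W S e) ∧ ∀ e ∈ E, ∀ f ∈ E, ∀ v : V, v ∈ e → v ∈ f → e = f

/-- `E` is a perfect matching of the graph with weights `W` on the vertex set `S`:
a matching covering every vertex of `S`. -/
def IsPerfMatch {V : Type} (W : V → V → ℕ∞) (S : Set V) (E : Finset (Sym2 V)) : Prop :=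
  IsMatch W S E ∧ ∀ v ∈ S, ∃ e ∈ E, v ∈ e

/-- The weight of an edge (as an unordered pair). -/
noncomputable def ewt {V : Type} (W : V → V → ℕ∞) : Sym2 V → ℕ∞ :=
  Sym2.lift ⟨fun p q => min (W p q) (W q p), fun _ _ => min_comm _ _⟩

/-- The total weight of a matching. -/
noncomputable def mwt {V : Type} (W : V → V → ℕ∞) (E : Finset (Sym2 V)) : ℕ∞ :=
  ∑ e ∈ E, ewt W e

set_option linter.unreachableTactic false
set_option linter.unusedTactic false

namespace JUPM

def phi (C : ℕ) : GV → ℕ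
  | GV.a j => 2*j
  | GV.b i => 2*i + 2*C + 2
  | GV.u i j => 2*i + 2*j
  | GV.v i j => 2*i + 2*j - 1
  | GV.w i j => 2*i + 2*j + 1
  | GV.x i j => 2*i + 2*j

def Phi0 (R C : ℕ) : GV × Bool → ℕ
  | (z, true) => phi C z
  | (z, false) => 2*(2*R+2*C+3) - phi C z

def flip (p : GV × Bool) : GV × Bool := (p.1, !p.2)

lemma ite_netop {c : Prop} [Decidable c] {v : ℕ∞} (h : (if c then v else ⊤) ≠ ⊤) : c := by
  by_contra hc; simp [hc] at h

lemma Kd' (R C : ℕ) (W0 : GV → GV → ℕ∞)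
    (hW : ∀ p q, W0 p q ≠ ⊤ →
      dirW R C (fun _ _ => true) p q ≠ ⊤ ∨ dirW R C (fun _ _ => true) q p ≠ ⊤)
    (p q : GV × Bool) (h : dblDir C W0 p q ≠ ⊤) (hne : q ≠ flip p) :
    Phi0 R C (flip q) < Phi0 R C p ∧ Phi0 R C (flip p) < Phi0 R C q := by
  obtain ⟨z1, b1⟩ := p; obtain ⟨z2, b2⟩ := q
  simp only [flip] at hne ⊢
  cases z1 <;> cases z2 <;> cases b1 <;> cases b2 <;>
    simp only [dblDir, Bool.not_true, Bool.not_false] at h hne ⊢ <;>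
    first
    | exact absurd rfl h
    | (have hc := ite_netop h
       rw [if_pos hc] at h
       first
       | (simp at hc; done)
       | (simp only [GV.a.injEq, GV.b.injEq, GV.u.injEq, GV.v.injEq, GV.w.injEq,
            GV.x.injEq] at hc
          (first | (obtain ⟨rfl, rfl⟩ := hc) | (subst hc)); exact absurd rfl hne)
       | (rcases hW _ _ h with h' | h' <;>
            simp only [dirW] at h' <;>
            first
            | exact absurd rfl h'
            | (have hc' := ite_netop h'
               simp only [Phi0, phi, Bool.not_true, Bool.not_false]
               simp only [true_and, and_true, eq_self_iff_true] at hc'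
               omega)))
lemma flip_flip (p : GV × Bool) : flip (flip p) = p := by
  obtain ⟨z, b⟩ := p; simp [flip]

lemma hW_wgrid (R C X : ℕ) (hX : 2 ≤ X) (B : ℕ → ℕ → ℕ) (p q : GV)
    (h : wgridW R C X B p q ≠ ⊤) :
    dirW R C (fun _ _ => true) p q ≠ ⊤ ∨ dirW R C (fun _ _ => true) q p ≠ ⊤ := by
  have hx2 : ((X : ℕ∞)) ^ 2 ≠ 0 :=
    pow_ne_zero 2 (by exact_mod_cast (by omega : X ≠ 0))
  by_contra hcon
  rw [not_or, not_ne_iff, not_ne_iff] at hcon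
  apply h
  have e1 : dirWt R C X B p q = ⊤ := by
    unfold dirWt; rw [hcon.1, ENat.mul_top hx2, top_add]
  have e2 : dirWt R C X B q p = ⊤ := by
    unfold dirWt; rw [hcon.2, ENat.mul_top hx2, top_add]
  unfold wgridW symW
  rw [e1, e2, min_self]

lemma dirW_mono (R C : ℕ) (M : ℕ → ℕ → Bool) (p q : GV) (h : dirW R C M p q ≠ ⊤) :
    dirW R C (fun _ _ => true) p q ≠ ⊤ := by
  cases p <;> cases q <;> simp only [dirW] at h ⊢ <;>
    first
    | exact h
    | (have hc := ite_netop h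
       rw [if_pos (by tauto)]
       simp)

lemma hW_mir (R C X : ℕ) (hX : 2 ≤ X) (p q : GV) (h : mirW R C X p q ≠ ⊤) :
    dirW R C (fun _ _ => true) p q ≠ ⊤ ∨ dirW R C (fun _ _ => true) q p ≠ ⊤ := by
  have hx2 : ((X : ℕ∞)) ^ 2 ≠ 0 :=
    pow_ne_zero 2 (by exact_mod_cast (by omega : X ≠ 0))
  by_contra hcon
  rw [not_or, not_ne_iff, not_ne_iff] at hcon
  apply h
  have e1 : dirW R C (fun _ _ => false) p q = ⊤ := by
    by_contra hf; exact (dirW_mono R C _ p q hf) hcon.1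
  have e2 : dirW R C (fun _ _ => false) q p = ⊤ := by
    by_contra hf; exact (dirW_mono R C _ q p hf) hcon.2
  unfold mirW gridW symW
  rw [e1, e2, min_self, ENat.mul_top hx2]

lemma Kd (R C : ℕ) (W0 : GV → GV → ℕ∞)
    (hW : ∀ p q, W0 p q ≠ ⊤ →
      dirW R C (fun _ _ => true) p q ≠ ⊤ ∨ dirW R C (fun _ _ => true) q p ≠ ⊤)
    (p q : GV × Bool) (h : dblW C W0 p q ≠ ⊤) (hne : q ≠ flip p) :
    Phi0 R C (flip q) < Phi0 R C p ∧ Phi0 R C (flip p) < Phi0 R C q := by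
  have hor : dblDir C W0 p q ≠ ⊤ ∨ dblDir C W0 q p ≠ ⊤ := by
    by_contra hcon; rw [not_or, not_ne_iff, not_ne_iff] at hcon
    exact h (by unfold dblW symW; rw [hcon.1, hcon.2, min_self])
  rcases hor with h1 | h1
  · exact Kd' R C W0 hW p q h1 hne
  · have hne2 : p ≠ flip q := fun e => hne (by rw [e, flip_flip])
    exact (Kd' R C W0 hW q p h1 hne2).symm
def Phi (R C : ℕ) : (GV × Bool) ⊕ (GV × Bool) → ℕ
  | Sum.inl p => Phi0 R C p
  | Sum.inr p => Phi0 R C p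

def flipS : (GV × Bool) ⊕ (GV × Bool) → (GV × Bool) ⊕ (GV × Bool)
  | Sum.inl p => Sum.inl (flip p)
  | Sum.inr p => Sum.inr (flip p)

lemma flipS_flipS (P : (GV × Bool) ⊕ (GV × Bool)) : flipS (flipS P) = P := by
  rcases P with p | p <;> simp [flipS, flip_flip]

lemma flipS_mem {R C : ℕ} {P : (GV × Bool) ⊕ (GV × Bool)} (h : P ∈ SJD R C) :
    flipS P ∈ SJD R C := by
  rcases P with ⟨z, b⟩ | ⟨z, b⟩ <;> exact h

lemma K (R C X : ℕ) (hX : 2 ≤ X) (A : ℕ → ℕ) (B : ℕ → ℕ → ℕ)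
    (P Q : (GV × Bool) ⊕ (GV × Bool))
    (h : jdblW R C X A B P Q ≠ ⊤) (hne : Q ≠ flipS P) :
    Phi R C (flipS Q) < Phi R C P ∧ Phi R C (flipS P) < Phi R C Q := by
  rcases P with ⟨z1, b1⟩ | ⟨z1, b1⟩ <;> rcases Q with ⟨z2, b2⟩ | ⟨z2, b2⟩
  · simp only [jdblW] at h
    have hne' : (z2, b2) ≠ flip (z1, b1) := fun e => hne (congrArg Sum.inl e)
    exact Kd R C _ (hW_wgrid R C X hX B) _ _ h hne'
  · cases z1 <;> cases z2 <;> cases b1 <;> cases b2 <;> simp only [jdblW] at h <;>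
      first
      | exact absurd rfl h
      | (have hc := ite_netop h
         simp only [Phi, flipS, flip, Phi0, phi, Bool.not_true, Bool.not_false]
         omega)
  · cases z1 <;> cases z2 <;> cases b1 <;> cases b2 <;> simp only [jdblW] at h <;>
      first
      | exact absurd rfl h
      | (have hc := ite_netop h
         simp only [Phi, flipS, flip, Phi0, phi, Bool.not_true, Bool.not_false]
         omega)
  · simp only [jdblW] at h
    have hne' : (z2, b2) ≠ flip (z1, b1) := fun e => hne (congrArg Sum.inr e)
    exact Kd R C _ (hW_mir R C X hX) _ _ h hne'
lemma descent (R C X : ℕ) (hX : 2 ≤ X) (B : ℕ → ℕ → ℕ)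
    (E : Finset (Sym2 ((GV × Bool) ⊕ (GV × Bool))))
    (hE : IsPerfMatch (jdblW R C X (fun _ => 0) B) (SJD R C) E) :
    ∀ A, ∀ e ∈ E, A ∈ e → e = s(A, flipS A) := by
  obtain ⟨⟨hok, hdisj⟩, hcov⟩ := hE
  have main : ∀ n A, Phi R C A ≤ n → ∀ e ∈ E, A ∈ e → e = s(A, flipS A) := by
    intro n
    induction n using Nat.strong_induction_on with
    | _ n ih =>
      intro A hA e he hAe
      obtain ⟨p, q, rfl, hpq, hWt, hpS, hqS⟩ := hok e he
      rcases Sym2.mem_iff.mp hAe with rfl | rfl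
      · by_contra hne0
        have hne : q ≠ flipS A := fun e' => hne0 (by rw [e'])
        have hk : Phi R C (flipS q) < Phi R C A :=
          (K R C X hX _ B A q hWt hne).1
        obtain ⟨f, hf, hBf⟩ := hcov _ (flipS_mem hqS)
        have hf' : f = s(flipS q, q) := by
          have := ih (Phi R C (flipS q)) (lt_of_lt_of_le hk hA) (flipS q) le_rfl f hf hBf
          rw [this, flipS_flipS]
        have hq_f : q ∈ f := by rw [hf']; simp
        have heq : s(A, q) = f := hdisj _ he _ hf q (by simp) hq_f
        rw [hf'] at heq
        rcases Sym2.eq_iff.mp heq with ⟨h1, _⟩ | ⟨h1, _⟩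
        · exact hne (by rw [h1, flipS_flipS])
        · exact hpq h1
      · by_contra hne0
        have hne : p ≠ flipS A := by
          intro e'
          apply hne0
          rw [e']
          exact Sym2.eq_swap
        have hneK : A ≠ flipS p := fun e' => hne (by rw [e', flipS_flipS])
        have hk : Phi R C (flipS p) < Phi R C A :=
          (K R C X hX _ B p A hWt hneK).2
        obtain ⟨f, hf, hBf⟩ := hcov _ (flipS_mem hpS)
        have hf' : f = s(flipS p, p) := by
          have := ih (Phi R C (flipS p)) (lt_of_lt_of_le hk hA) (flipS p) le_rfl f hf hBf
          rw [this, flipS_flipS]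
        have hp_f : p ∈ f := by rw [hf']; simp
        have heq : s(p, A) = f := hdisj _ he _ hf p (by simp) hp_f
        rw [hf'] at heq
        rcases Sym2.eq_iff.mp heq with ⟨_, h2⟩ | ⟨_, h2⟩
        · exact hpq h2.symm
        · exact hne (by rw [h2, flipS_flipS])
  intro A e he hAe
  exact main (Phi R C A) A le_rfl e he hAe
def VF (R C : ℕ) (wx : Bool) : Finset GV :=
  ((Finset.Icc 1 C).image GV.a) ∪ ((Finset.Icc 1 R).image GV.b) ∪
  (((Finset.Icc 1 R) ×ˢ (Finset.Icc 1 C)).image fun p => GV.u p.1 p.2) ∪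
  (((Finset.Icc 1 R) ×ˢ (Finset.Icc 1 C)).image fun p => GV.v p.1 p.2) ∪
  (((Finset.Icc 1 R) ×ˢ (Finset.Icc 1 C)).image fun p => GV.w p.1 p.2) ∪
  (if wx then ((Finset.Icc 1 R) ×ˢ (Finset.Icc 1 C)).image (fun p => GV.x p.1 p.2)
   else ∅)

lemma mem_VF (R C : ℕ) (wx : Bool) (z : GV) : z ∈ VF R C wx ↔ inV R C wx z := by
  cases z <;> cases wx <;>
    simp [VF, inV, Finset.mem_Icc, Finset.mem_product] <;> aesop

def E0 (R C : ℕ) : Finset (Sym2 ((GV × Bool) ⊕ (GV × Bool))) :=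
  ((VF R C true).image fun z => s(Sum.inl (z, true), Sum.inl (z, false))) ∪
  ((VF R C false).image fun z => s(Sum.inr (z, true), Sum.inr (z, false)))

lemma mem_E0 (R C : ℕ) (e : Sym2 ((GV × Bool) ⊕ (GV × Bool))) :
    e ∈ E0 R C ↔
      ((∃ z : GV, inV R C true z ∧ e = s(Sum.inl (z, true), Sum.inl (z, false))) ∨
       (∃ z : GV, inV R C false z ∧ e = s(Sum.inr (z, true), Sum.inr (z, false)))) := by
  simp [E0, mem_VF, eq_comm]

lemma dblDir_pair (C : ℕ) (W0 : GV → GV → ℕ∞) (z : GV) :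
    dblDir C W0 (z, true) (z, false) = 0 := by
  cases z <;> simp [dblDir]

lemma dblW_pair (C : ℕ) (W0 : GV → GV → ℕ∞) (z : GV) :
    dblW C W0 (z, true) (z, false) = 0 := by
  unfold dblW symW
  rw [dblDir_pair]
  exact min_eq_left zero_le

lemma pairing_edgeOK_l (R C X : ℕ) (B : ℕ → ℕ → ℕ) (z : GV) (hz : inV R C true z) :
    edgeOK (jdblW R C X (fun _ => 0) B) (SJD R C)
      s(Sum.inl (z, true), Sum.inl (z, false)) := by
  refine ⟨Sum.inl (z, true), Sum.inl (z, false), rfl, by simp, ?_, hz, hz⟩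
  have hred : jdblW R C X (fun _ => 0) B (Sum.inl (z, true)) (Sum.inl (z, false)) =
      dblW C (wgridW R C X B) (z, true) (z, false) := by simp only [jdblW]
  rw [hred, dblW_pair]
  simp

lemma pairing_edgeOK_r (R C X : ℕ) (B : ℕ → ℕ → ℕ) (z : GV) (hz : inV R C false z) :
    edgeOK (jdblW R C X (fun _ => 0) B) (SJD R C)
      s(Sum.inr (z, true), Sum.inr (z, false)) := by
  refine ⟨Sum.inr (z, true), Sum.inr (z, false), rfl, by simp, ?_, hz, hz⟩
  have hred : jdblW R C X (fun _ => 0) B (Sum.inr (z, true)) (Sum.inr (z, false)) =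
      dblW C (mirW R C X) (z, true) (z, false) := by simp only [jdblW]
  rw [hred, dblW_pair]
  simp

lemma E0_perf (R C X : ℕ) (B : ℕ → ℕ → ℕ) :
    IsPerfMatch (jdblW R C X (fun _ => 0) B) (SJD R C) (E0 R C) := by
  refine ⟨⟨?_, ?_⟩, ?_⟩
  · intro e he
    rcases (mem_E0 R C e).mp he with ⟨z, hz, rfl⟩ | ⟨z, hz, rfl⟩
    · exact pairing_edgeOK_l R C X B z hz
    · exact pairing_edgeOK_r R C X B z hz
  · intro e he f hf v hv hw
    rcases (mem_E0 R C e).mp he with ⟨z1, hz1, rfl⟩ | ⟨z1, hz1, rfl⟩ <;>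
      rcases (mem_E0 R C f).mp hf with ⟨z2, hz2, rfl⟩ | ⟨z2, hz2, rfl⟩ <;>
      rcases Sym2.mem_iff.mp hv with rfl | rfl <;>
      rcases Sym2.mem_iff.mp hw with h | h <;>
      simp_all
  · intro v hv
    rcases v with ⟨z, b⟩ | ⟨z, b⟩
    · refine ⟨s(Sum.inl (z, true), Sum.inl (z, false)), ?_, ?_⟩
      · exact (mem_E0 R C _).mpr (Or.inl ⟨z, hv, rfl⟩)
      · cases b <;> simp
    · refine ⟨s(Sum.inr (z, true), Sum.inr (z, false)), ?_, ?_⟩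
      · exact (mem_E0 R C _).mpr (Or.inr ⟨z, hv, rfl⟩)
      · cases b <;> simp
lemma flipS_l_true (z : GV) :
    flipS (Sum.inl (z, true)) = Sum.inl (z, false) := rfl
lemma flipS_r_true (z : GV) :
    flipS (Sum.inr (z, true)) = Sum.inr (z, false) := rfl
lemma flipS_l_false (z : GV) :
    flipS (Sum.inl (z, false)) = Sum.inl (z, true) := rfl
lemma flipS_r_false (z : GV) :
    flipS (Sum.inr (z, false)) = Sum.inr (z, true) := rfl

end JUPM

/-- Proposition 4.2.  The graph obtained by joining the doubled grids
`\bar{G}_B` and `\bar{G}'_B` via an edge `(b^r k, b'^l k)` for each `1 ≤ k ≤ R` has a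
unique perfect matching, namely the set of all weight-0 pairing edges
`{(z^u, z^d)} ∪ {(z^l, z^r)}`. -/
theorem jdbl_unique_perfect_matching (R C X : ℕ) (hR : 1 ≤ R) (hC : 1 ≤ C) (hX : 2 ≤ X)
    (B : ℕ → ℕ → ℕ) (hB : ∀ i j, 1 ≤ i → i ≤ R → 1 ≤ j → j ≤ C → B i j ≤ X) :
    (∃ E : Finset (Sym2 ((GV × Bool) ⊕ (GV × Bool))),
        IsPerfMatch (jdblW R C X (fun _ => 0) B) (SJD R C) E) ∧
      ∀ E : Finset (Sym2 ((GV × Bool) ⊕ (GV × Bool))),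
        IsPerfMatch (jdblW R C X (fun _ => 0) B) (SJD R C) E →
        ∀ e, e ∈ E ↔
          ((∃ z : GV, inV R C true z ∧ e = s(Sum.inl (z, true), Sum.inl (z, false))) ∨
           (∃ z : GV, inV R C false z ∧ e = s(Sum.inr (z, true), Sum.inr (z, false)))) := by
  constructor
  · exact ⟨JUPM.E0 R C, JUPM.E0_perf R C X B⟩
  · intro E hE e
    constructor
    · intro he
      obtain ⟨p, q, heq, hpq, hWt, hpS, hqS⟩ := hE.1.1 e he
      have hL := JUPM.descent R C X hX B E hE p e he (by rw [heq]; simp)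
      rcases p with ⟨z, b⟩ | ⟨z, b⟩
      · left
        refine ⟨z, hpS, ?_⟩
        cases b
        · rw [hL, JUPM.flipS_l_false]; exact Sym2.eq_swap
        · rw [hL, JUPM.flipS_l_true]
      · right
        refine ⟨z, hpS, ?_⟩
        cases b
        · rw [hL, JUPM.flipS_r_false]; exact Sym2.eq_swap
        · rw [hL, JUPM.flipS_r_true]
    · intro hform
      rcases hform with ⟨z, hz, rfl⟩ | ⟨z, hz, rfl⟩
      · have hvS : Sum.inl (z, true) ∈ SJD R C := hz
        obtain ⟨f, hf, hvf⟩ := hE.2 _ hvS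
        have hfe := JUPM.descent R C X hX B E hE (Sum.inl (z, true)) f hf hvf
        rw [JUPM.flipS_l_true] at hfe
        rwa [hfe] at hf
      · have hvS : Sum.inr (z, true) ∈ SJD R C := hz
        obtain ⟨f, hf, hvf⟩ := hE.2 _ hvS
        have hfe := JUPM.descent R C X hX B E hE (Sum.inr (z, true)) f hf hvf
        rw [JUPM.flipS_r_true] at hfe
        rwa [hfe] at hf
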